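/- If B is a real m×n matrix with no row equal to the zero vector, then the column space of B contains a vector with all entries nonzero. -/
import Mathlib

theorem stmt_13 {m n : ℕ} (B : Matrix (Fin m) (Fin n) ℝ)
    (hB : ∀ i, ∃ j, B i j ≠ 0) :
    ∃ v ∈ Submodule.span ℝ (Set.range (fun j i => B i j)), ∀ i, v i ≠ 0 := by
  set L : Fin m → ((Fin n → ℝ) →ₗ[ℝ] ℝ) :=
    fun i => (LinearMap.proj i).comp B.mulVecLin with hL
  have hker : ∀ i, LinearMap.ker (L i) ≠ ⊤ := by
    intro i htop
    obtain ⟨j, hj⟩ := hB i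
    have : L i (Pi.single j 1) = 0 := by
      rw [← LinearMap.mem_ker, htop]; trivial
    simp [hL, Matrix.mulVec_single] at this
    exact hj this
  have hcover : ⋃ i, ((LinearMap.ker (L i) : Submodule ℝ (Fin n → ℝ)) : Set (Fin n → ℝ)) ≠ Set.univ := by
    intro h
    obtain ⟨i, hi⟩ := Subspace.exists_eq_top_of_iUnion_eq_univ h
    exact hker i hi
  obtain ⟨c, hc⟩ := Set.ne_univ_iff_exists_notMem _ |>.mp hcover
  simp only [Set.mem_iUnion, not_exists, SetLike.mem_coe, LinearMap.mem_ker] at hc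
  refine ⟨B.mulVec c, ?_, fun i => by simpa [hL, Matrix.mulVecLin] using hc i⟩
  have : B.mulVec c = ∑ j, c j • (fun i => B i j) := by
    ext i
    simp [Matrix.mulVec, dotProduct, Finset.sum_apply, mul_comm]
  rw [this]
  exact Submodule.sum_mem _ fun j _ =>
    Submodule.smul_mem _ _ (Submodule.subset_span ⟨j, rfl⟩)
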